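/- Let 𝒴 be a countable label set, let p and q be probability mass functions on 𝒴 (the output distributions at a perturbed input of the unlearned model and of the re-trained model, whose draws are independent), and let y ∈ 𝒴 satisfy q(y) > 0. Set r = p(y)/q(y) (the residual knowledge at y) and let D = ∑_{l ∈ 𝒴} p(l)·(1 − q(l)) denote the probability that two independent draws l ∼ p and l' ∼ q satisfy l ≠ l' (the expected adversarial disagreement). Then r·q(y)·(1 − q(y)) ≤ D ≤ 1 − r·q(y)². -/
import Mathlib


/-- Lemma A.4 (bounding adversarial disagreement with residual knowledge):
for pmfs `p`, `q` on a countable label set, a label `y` with `q y > 0`,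
residual knowledge `r = p y / q y`, and expected adversarial disagreement
`D = ∑' l, p l * (1 - q l)`, one has
`r * q y * (1 - q y) ≤ D ≤ 1 - r * (q y)^2`. -/
theorem residual_knowledge_bounds_disagreement
    {Y : Type*} [Countable Y] (p q : Y → ℝ)
    (hp0 : ∀ l, 0 ≤ p l) (hq0 : ∀ l, 0 ≤ q l)
    (hp1 : HasSum p 1) (hq1 : HasSum q 1)
    (y : Y) (hy : 0 < q y) :
    (p y / q y) * q y * (1 - q y) ≤ (∑' l, p l * (1 - q l)) ∧
    (∑' l, p l * (1 - q l)) ≤ 1 - (p y / q y) * (q y) ^ 2 := by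
  have hq1' : ∀ l, q l ≤ 1 := fun l => le_hasSum hq1 l (fun i _ => hq0 i)
  have hps : Summable p := hp1.summable
  have hnn : ∀ l, 0 ≤ p l * (1 - q l) := fun l =>
    mul_nonneg (hp0 l) (by linarith [hq1' l])
  have hsum : Summable (fun l => p l * (1 - q l)) :=
    hps.of_nonneg_of_le hnn (fun l => by nlinarith [hp0 l, hq0 l])
  have hsum2 : Summable (fun l => p l * q l) :=
    hps.of_nonneg_of_le (fun l => mul_nonneg (hp0 l) (hq0 l))
      (fun l => by nlinarith [hp0 l, hq0 l, hq1' l])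
  have hcancel : p y / q y * q y = p y := div_mul_cancel₀ _ hy.ne'
  constructor
  · have := Summable.le_tsum hsum y (fun i _ => hnn i)
    calc p y / q y * q y * (1 - q y) = p y * (1 - q y) := by rw [hcancel]
      _ ≤ _ := this
  · have heq : (∑' l, p l * (1 - q l)) = 1 - ∑' l, p l * q l := by
      have : (fun l => p l * (1 - q l)) = fun l => p l - p l * q l := by
        funext l; ring
      rw [this, Summable.tsum_sub hps hsum2, hp1.tsum_eq]
    rw [heq]
    have := Summable.le_tsum hsum2 y (fun i _ => mul_nonneg (hp0 i) (hq0 i))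
    have : p y / q y * q y ^ 2 = p y * q y := by
      rw [sq, ← mul_assoc, hcancel]
    nlinarith [Summable.le_tsum hsum2 y (fun i _ => mul_nonneg (hp0 i) (hq0 i))]
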